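/- arXiv:1905.00313 — 2 statements merged into one kernel-verified Lean document; each statement's English description precedes it below -/
import Mathlib

section
/- If f is convex differentiable, x* a minimizer, and the Polyak step size η_t = h_t/‖∇f(x_t)‖² is used (when ∇f(x_t) ≠ 0), then ‖x_{t+1} - x*‖² ≤ ‖x_t - x*‖² - h_t²/‖∇f(x_t)‖². -/
open RealInnerProductSpace

lemma grad_ineq {d : ℕ} (f : EuclideanSpace ℝ (Fin d) → ℝ)
    (hconv : ConvexOn ℝ Set.univ f) (x y g : EuclideanSpace ℝ (Fin d))
    (hg : HasGradientAt f g x) : f x + ⟪g, y - x⟫ ≤ f y := by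
  set A : ℝ →ᵃ[ℝ] EuclideanSpace ℝ (Fin d) := AffineMap.lineMap x y with hA
  have hAconv : ConvexOn ℝ Set.univ (f ∘ A) := by
    have := hconv.comp_affineMap A
    simpa using this
  have hAderiv : HasDerivAt (fun t : ℝ => A t) (y - x) 0 := by
    have : (fun t : ℝ => A t) = fun t : ℝ => t • (y - x) + x := by
      funext t; simp [hA, AffineMap.lineMap_apply]
    rw [this]
    simpa using ((hasDerivAt_id (0:ℝ)).smul_const (y - x)).add_const x
  have hcomp : HasDerivAt (f ∘ A) ⟪g, y - x⟫ 0 := by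
    have hf : HasFDerivAt f ((InnerProductSpace.toDual ℝ (EuclideanSpace ℝ (Fin d))) g) (A 0) := by
      simpa [hA] using hg.hasFDerivAt
    have := hf.comp_hasDerivAt (0:ℝ) hAderiv
    simpa using this
  have hslope := hAconv.le_slope_of_hasDerivAt (x := (0:ℝ)) (y := 1)
    (Set.mem_univ _) (Set.mem_univ _) zero_lt_one hcomp
  have hs : slope (f ∘ A) 0 1 = f y - f x := by
    simp [slope_def_field, hA]
  rw [hs] at hslope
  have : (f ∘ A) 0 = f x := by simp [hA]
  linarith [hslope]

theorem stmt_1 {d : ℕ} (f : EuclideanSpace ℝ (Fin d) → ℝ)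
    (g : EuclideanSpace ℝ (Fin d) → EuclideanSpace ℝ (Fin d))
    (hg : ∀ x, HasGradientAt f (g x) x)
    (hconv : ConvexOn ℝ Set.univ f)
    (xstar xt xt1 : EuclideanSpace ℝ (Fin d))
    (hmin : ∀ y, f xstar ≤ f y)
    (hgrad : g xt ≠ 0)
    (hupd : xt1 = xt - ((f xt - f xstar) / ‖g xt‖ ^ 2) • g xt) :
    ‖xt1 - xstar‖ ^ 2 ≤ ‖xt - xstar‖ ^ 2 - (f xt - f xstar) ^ 2 / ‖g xt‖ ^ 2 := by
  set h := f xt - f xstar with hh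
  set η := h / ‖g xt‖ ^ 2 with hη
  have hgpos : (0:ℝ) < ‖g xt‖ ^ 2 := pow_pos (norm_pos_iff.mpr hgrad) 2
  have hge : h ≤ ⟪g xt, xt - xstar⟫ := by
    have := grad_ineq f hconv xt xstar (g xt) (hg xt)
    have h2 : ⟪g xt, xstar - xt⟫ = -⟪g xt, xt - xstar⟫ := by
      rw [← inner_neg_right]; congr 1; abel
    rw [h2] at this; linarith
  have hh0 : 0 ≤ h := sub_nonneg.mpr (hmin xt)
  have hexp : ‖xt1 - xstar‖ ^ 2
      = ‖xt - xstar‖ ^ 2 - 2 * η * ⟪g xt, xt - xstar⟫ + η ^ 2 * ‖g xt‖ ^ 2 := by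
    have : xt1 - xstar = (xt - xstar) - η • g xt := by rw [hupd]; abel
    rw [this, norm_sub_sq_real, real_inner_smul_right, norm_smul, mul_pow, Real.norm_eq_abs, sq_abs,
      real_inner_comm]
    ring
  have hη2 : η ^ 2 * ‖g xt‖ ^ 2 = h ^ 2 / ‖g xt‖ ^ 2 := by
    rw [hη]; field_simp [norm_ne_zero_iff.mpr hgrad]
  have hmul : 2 * (h ^ 2 / ‖g xt‖ ^ 2) ≤ 2 * η * ⟪g xt, xt - xstar⟫ := by
    have : h ^ 2 / ‖g xt‖ ^ 2 = η * h := by rw [hη]; field_simp [norm_ne_zero_iff.mpr hgrad]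
    rw [this]
    have hηnn : 0 ≤ η := by positivity
    nlinarith
  rw [hexp, hη2]
  linarith
end

section
/- Let f be convex differentiable with minimizer x* and bounded gradients ‖∇f(x_t)‖ ≤ G along Polyak-stepsize iterates x_{t+1} = x_t - (h_t/‖∇f(x_t)‖²)∇f(x_t). Then min_{0 ≤ t < T} (f(x_t) - f(x*)) ≤ G‖x_0 - x*‖/√T. -/
open RealInnerProductSpace

lemma grad_ineq_aux {d : ℕ} {f : EuclideanSpace ℝ (Fin d) → ℝ}
    (hconv : ConvexOn ℝ Set.univ f) {g x y : EuclideanSpace ℝ (Fin d)}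
    (hg : HasGradientAt f g x) : ⟪g, y - x⟫ ≤ f y - f x := by
  have hfd : HasFDerivAt f (InnerProductSpace.toDual ℝ _ g) x := hg.hasFDerivAt
  set φ : ℝ → ℝ := fun s => f (s • (y - x) + x) with hφ
  have hline : HasDerivAt (fun s : ℝ => s • (y - x) + x) (y - x) 0 := by
    simpa using ((hasDerivAt_id (0 : ℝ)).smul_const (y - x)).add_const x
  have hfd0 : HasFDerivAt f (InnerProductSpace.toDual ℝ _ g) ((0:ℝ) • (y - x) + x) := by
    simpa using hfd
  have hderiv : HasDerivAt φ ⟪g, y - x⟫ 0 := by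
    have H := hfd0.comp_hasDerivAt 0 hline
    simp at H
    exact H
  have hφconv : ConvexOn ℝ Set.univ φ := by
    have := hconv.comp_affineMap (AffineMap.lineMap x y : ℝ →ᵃ[ℝ] _)
    have heq : φ = f ∘ (AffineMap.lineMap x y : ℝ →ᵃ[ℝ] _) := by
      funext s; simp [hφ, AffineMap.lineMap_apply, add_comm]
    rw [heq]
    simpa using this
  have := hφconv.le_slope_of_hasDerivAt (Set.mem_univ 0) (Set.mem_univ 1) zero_lt_one hderiv
  simpa [slope_def_field, hφ] using this

theorem stmt_18 {d : ℕ} (f : EuclideanSpace ℝ (Fin d) → ℝ)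
    (g : EuclideanSpace ℝ (Fin d) → EuclideanSpace ℝ (Fin d))
    (hg : ∀ x, HasGradientAt f (g x) x)
    (hconv : ConvexOn ℝ Set.univ f)
    (xstar : EuclideanSpace ℝ (Fin d))
    (hmin : ∀ y, f xstar ≤ f y)
    (x : ℕ → EuclideanSpace ℝ (Fin d))
    (hupd : ∀ t, x (t + 1) = x t - ((f (x t) - f xstar) / ‖g (x t)‖ ^ 2) • g (x t))
    (G : ℝ) (hG : 0 < G) (hgrad : ∀ t, ‖g (x t)‖ ≤ G)
    (T : ℕ) (hT : 1 ≤ T) :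
    ∃ t < T, f (x t) - f xstar ≤ G * ‖x 0 - xstar‖ / Real.sqrt T := by
  by_contra hcon
  push_neg at hcon
  set B : ℝ := G * ‖x 0 - xstar‖ / Real.sqrt T with hB
  have hBnn : 0 ≤ B :=
    div_nonneg (mul_nonneg hG.le (norm_nonneg _)) (Real.sqrt_nonneg _)
  set h : ℕ → ℝ := fun t => f (x t) - f xstar with hh
  have hcon' : ∀ t < T, B < h t := hcon
  have hgi : ∀ t, h t ≤ ⟪g (x t), x t - xstar⟫ := by
    intro t
    have h1 := grad_ineq_aux hconv (hg (x t)) (y := xstar)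
    have h2 : ⟪g (x t), xstar - x t⟫ = -⟪g (x t), x t - xstar⟫ := by
      rw [← inner_neg_right, neg_sub]
    rw [h2] at h1
    simp only [hh]
    linarith
  have hzero : ∀ t, g (x t) = 0 → h t ≤ 0 := by
    intro t h0
    have h1 := grad_ineq_aux hconv (hg (x t)) (y := xstar)
    rw [h0] at h1
    simp only [inner_zero_left] at h1
    simp only [hh]
    linarith
  have hupd' : ∀ t, x (t + 1) = x t - (h t / ‖g (x t)‖ ^ 2) • g (x t) := hupd
  clear_value B h
  clear hcon hupd hh hmin hconv hg
  have hpos : ∀ t < T, 0 < h t := fun t ht => lt_of_le_of_lt hBnn (hcon' t ht)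
  -- per-step descent
  have hstep : ∀ t < T, ‖x (t + 1) - xstar‖ ^ 2 ≤ ‖x t - xstar‖ ^ 2 - h t ^ 2 / G ^ 2 := by
    intro t ht
    have hgt0 : g (x t) ≠ 0 := by
      intro h0
      exact absurd (hzero t h0) (not_le.mpr (hpos t ht))
    have hgn : (0:ℝ) < ‖g (x t)‖ ^ 2 := pow_pos (norm_pos_iff.mpr hgt0) 2
    set c : ℝ := h t / ‖g (x t)‖ ^ 2 with hc
    have hxu : x (t + 1) - xstar = (x t - xstar) - c • g (x t) := by
      rw [hupd' t]; abel
    have hexp : ‖x (t + 1) - xstar‖ ^ 2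
        = ‖x t - xstar‖ ^ 2 - 2 * c * ⟪g (x t), x t - xstar⟫ + c ^ 2 * ‖g (x t)‖ ^ 2 := by
      rw [hxu, @norm_sub_sq_real]
      rw [real_inner_smul_right, real_inner_comm, norm_smul]
      ring_nf
      rw [Real.norm_eq_abs, sq_abs]
    have hcpos : 0 < c := div_pos (hpos t ht) hgn
    have h1 : c ^ 2 * ‖g (x t)‖ ^ 2 = h t ^ 2 / ‖g (x t)‖ ^ 2 := by
      rw [hc]; field_simp
    have h2 : 2 * c * h t ≤ 2 * c * ⟪g (x t), x t - xstar⟫ := by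
      have := hgi t
      nlinarith
    have h3 : 2 * c * h t = 2 * (h t ^ 2 / ‖g (x t)‖ ^ 2) := by
      rw [hc]; field_simp
    have hkey : ‖x (t + 1) - xstar‖ ^ 2 ≤ ‖x t - xstar‖ ^ 2 - h t ^ 2 / ‖g (x t)‖ ^ 2 := by
      rw [hexp]
      linarith
    have hdiv : h t ^ 2 / G ^ 2 ≤ h t ^ 2 / ‖g (x t)‖ ^ 2 := by
      apply div_le_div_of_nonneg_left (by positivity) hgn
      nlinarith [hgrad t, norm_nonneg (g (x t))]
    linarith
  -- telescoping
  have hsum : ∀ n ≤ T, (∑ t ∈ Finset.range n, h t ^ 2 / G ^ 2)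
      ≤ ‖x 0 - xstar‖ ^ 2 - ‖x n - xstar‖ ^ 2 := by
    intro n hn
    induction n with
    | zero => simp
    | succ k ih =>
      have hk : k < T := hn
      have := hstep k hk
      have := ih (Nat.le_of_succ_le hn)
      rw [Finset.sum_range_succ]
      linarith
  have hsumT := hsum T le_rfl
  have hsum2 : (∑ t ∈ Finset.range T, h t ^ 2) ≤ G ^ 2 * ‖x 0 - xstar‖ ^ 2 := by
    have h1 : (∑ t ∈ Finset.range T, h t ^ 2 / G ^ 2)
        = (∑ t ∈ Finset.range T, h t ^ 2) / G ^ 2 := by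
      rw [← Finset.sum_div]
    have h2 : (0:ℝ) ≤ ‖x T - xstar‖ ^ 2 := by positivity
    have hG2 : (0:ℝ) < G ^ 2 := by positivity
    rw [h1] at hsumT
    rw [div_le_iff₀ hG2] at hsumT
    nlinarith [hsumT]
  -- lower bound
  have hTpos : (0:ℝ) < (T:ℝ) := by exact_mod_cast hT
  have hB2 : (T:ℝ) * B ^ 2 = G ^ 2 * ‖x 0 - xstar‖ ^ 2 := by
    rw [hB, div_pow, Real.sq_sqrt hTpos.le]
    field_simp
  have hlt : (T:ℝ) * B ^ 2 < ∑ t ∈ Finset.range T, h t ^ 2 := by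
    have hne : (Finset.range T).Nonempty := ⟨0, Finset.mem_range.mpr hT⟩
    have := Finset.sum_lt_sum_of_nonempty hne
      (f := fun _ => B ^ 2) (g := fun t => h t ^ 2) ?_
    · simpa [Finset.sum_const, Finset.card_range, mul_comm] using this
    · intro t ht
      have hct : B < h t := hcon' t (Finset.mem_range.mp ht)
      nlinarith [hct, hBnn]
  linarith
end
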